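/- Let A be a commutative Poisson algebra, n ≥ 1, and suppose the Poisson bracket on A^{⊗n} (tensor power with factorwise brackets Poisson-commuting across distinct factors) makes A^{⊗n} an integral domain with fraction field K. For linearly independent f_0, …, f_n ∈ A, set Δ_i = Σ_{σ ∈ S_n} ε(σ) ⊗_{j=1}^n f_{τ_i(σ,j)}, where the alternating sum is over arrangements of (f_0,…,f̂_i,…,f_n) in the n tensor slots, i.e., Δ_i = [f_0,…,f̂_i,…,f_n] := Σ_{σ} ε(σ) f_{σ(1)} ⊗ ⋯ ⊗ f_{σ(n)} with σ ranging over bijections from {1,…,n} to {0,…,n}\{i}. Then Δ_0 ≠ 0, and setting H_i = Δ_i/Δ_0 ∈ K, one has {H_i, H_j} = 0 for all i, j. -/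

import Mathlib

open scoped TensorProduct PiTensorProduct

/-- A Poisson bracket on a commutative ring. -/
def IsPoissonBracket {A : Type*} [CommRing A] (P : A → A → A) : Prop :=
  (∀ a b c : A, P (a + b) c = P a c + P b c) ∧
  (∀ a b : A, P a b = - P b a) ∧
  (∀ a b c : A, P a (b * c) = b * P a c + P a b * c) ∧
  (∀ a b c : A, P a (P b c) + P b (P c a) + P c (P a b) = 0)

set_option maxHeartbeats 1000000
set_option synthInstance.maxHeartbeats 400000

namespace Stmt8Aux

variable {K : Type*} [Field K]

lemma deriv_one {D : K → K} (hleib : ∀ a b : K, D (a * b) = a * D b + D a * b) :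
    D 1 = 0 := by
  have h := hleib 1 1
  rw [mul_one, one_mul, mul_one] at h
  exact (left_eq_add.mp h)

lemma deriv_prod {ι : Type*} [DecidableEq ι] {D : K → K}
    (hleib : ∀ a b : K, D (a * b) = a * D b + D a * b)
    (S : Finset ι) (g : ι → K) :
    D (∏ i ∈ S, g i) = ∑ i ∈ S, (∏ j ∈ S.erase i, g j) * D (g i) := by
  induction S using Finset.induction_on with
  | empty => simpa using deriv_one hleib
  | @insert a S ha ih =>
    rw [Finset.prod_insert ha, hleib, ih, Finset.sum_insert ha, Finset.erase_insert ha,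
      Finset.mul_sum]
    rw [add_comm]
    congr 1
    · ring
    · apply Finset.sum_congr rfl
      intro i hi
      have hne : i ≠ a := fun h => ha (h ▸ hi)
      rw [Finset.erase_insert_of_ne hne.symm]
      rw [Finset.prod_insert (fun h => ha (Finset.mem_of_mem_erase h))]
      ring


open Matrix in
lemma adjugate_eq_fiber_sum {N : ℕ} (M : Matrix (Fin N) (Fin N) K) (c m : Fin N) :
    adjugate M c m = ∑ σ ∈ Finset.univ.filter (fun σ : Equiv.Perm (Fin N) => σ c = m),
      ((Equiv.Perm.sign σ : ℤ) : K) * ∏ c' ∈ Finset.univ.erase c, M (σ c') c' := by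
  rw [adjugate_apply, det_apply]
  simp only [Units.smul_def, zsmul_eq_mul]
  rw [← Finset.sum_filter_add_sum_filter_not Finset.univ
    (fun σ : Equiv.Perm (Fin N) => σ c = m)]
  have h2 : ∑ σ ∈ Finset.univ.filter (fun σ : Equiv.Perm (Fin N) => ¬ σ c = m),
      ((Equiv.Perm.sign σ : ℤ) : K) * ∏ i, (M.updateRow m (Pi.single c 1)) (σ i) i = 0 := by
    apply Finset.sum_eq_zero
    intro σ hσ
    have hσc : ¬ σ c = m := (Finset.mem_filter.mp hσ).2
    have hzero : (M.updateRow m (Pi.single c 1)) (σ (σ⁻¹ m)) (σ⁻¹ m) = 0 := by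
      rw [show σ (σ⁻¹ m) = m from σ.apply_symm_apply m, Matrix.updateRow_self]
      apply Pi.single_eq_of_ne
      intro h
      apply hσc
      rw [← h, show σ (σ⁻¹ m) = m from σ.apply_symm_apply m]
    have hp := Finset.prod_eq_zero (f := fun i => (M.updateRow m (Pi.single c 1)) (σ i) i) (Finset.mem_univ (σ⁻¹ m)) hzero
    rw [hp, mul_zero]
  rw [h2, add_zero]
  apply Finset.sum_congr rfl
  intro σ hσ
  have hσc : σ c = m := (Finset.mem_filter.mp hσ).2
  congr 1
  rw [← Finset.mul_prod_erase Finset.univ _ (Finset.mem_univ c)]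
  have h1 : (M.updateRow m (Pi.single c 1)) (σ c) c = 1 := by
    rw [hσc, Matrix.updateRow_self, Pi.single_eq_same]
  rw [h1, one_mul]
  apply Finset.prod_congr rfl
  intro c' hc'
  have : σ c' ≠ m := by
    intro h
    exact (Finset.ne_of_mem_erase hc') (σ.injective (by rw [h, hσc]))
  rw [Matrix.updateRow_ne this]

open Matrix in
lemma deriv_det {N : ℕ} {D : K → K}
    (hadd : ∀ a b : K, D (a + b) = D a + D b)
    (hleib : ∀ a b : K, D (a * b) = a * D b + D a * b)
    (M : Matrix (Fin N) (Fin N) K) :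
    D M.det = ∑ m, ∑ c, adjugate M c m * D (M m c) := by
  have hD : ∀ (s : Finset (Equiv.Perm (Fin N))) (g : Equiv.Perm (Fin N) → K),
      D (∑ σ ∈ s, g σ) = ∑ σ ∈ s, D (g σ) := by
    intro s g
    exact map_sum (AddMonoidHom.mk' D hadd) g s
  have hDz : ∀ (z : ℤ) (a : K), D (z • a) = z • D a := by
    intro z a
    exact map_zsmul (AddMonoidHom.mk' D hadd) _ _
  rw [det_apply]
  simp only [Units.smul_def]
  rw [hD]
  have step1 : ∀ σ : Equiv.Perm (Fin N),
      D ((Equiv.Perm.sign σ : ℤ) • ∏ i, M (σ i) i)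
      = ∑ c, ((Equiv.Perm.sign σ : ℤ) : K) *
          ((∏ c' ∈ Finset.univ.erase c, M (σ c') c') * D (M (σ c) c)) := by
    intro σ
    rw [hDz, deriv_prod hleib, zsmul_eq_mul, Finset.mul_sum]
  calc (∑ σ : Equiv.Perm (Fin N), D ((Equiv.Perm.sign σ : ℤ) • ∏ i, M (σ i) i))
      = ∑ σ : Equiv.Perm (Fin N), ∑ c, ((Equiv.Perm.sign σ : ℤ) : K) *
          ((∏ c' ∈ Finset.univ.erase c, M (σ c') c') * D (M (σ c) c)) :=
        Finset.sum_congr rfl (fun σ _ => step1 σ)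
    _ = ∑ c, ∑ σ : Equiv.Perm (Fin N), ((Equiv.Perm.sign σ : ℤ) : K) *
          ((∏ c' ∈ Finset.univ.erase c, M (σ c') c') * D (M (σ c) c)) := Finset.sum_comm
    _ = ∑ c, ∑ m, ∑ σ ∈ Finset.univ.filter (fun σ : Equiv.Perm (Fin N) => σ c = m),
          ((Equiv.Perm.sign σ : ℤ) : K) *
          ((∏ c' ∈ Finset.univ.erase c, M (σ c') c') * D (M (σ c) c)) :=
        Finset.sum_congr rfl (fun c _ =>
          (Finset.sum_fiberwise Finset.univ (fun σ : Equiv.Perm (Fin N) => σ c) _).symm)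
    _ = ∑ c, ∑ m, adjugate M c m * D (M m c) := by
        apply Finset.sum_congr rfl
        intro c _
        apply Finset.sum_congr rfl
        intro m _
        rw [adjugate_eq_fiber_sum, Finset.sum_mul]
        apply Finset.sum_congr rfl
        intro σ hσ
        have hσc : σ c = m := (Finset.mem_filter.mp hσ).2
        rw [hσc]
        ring
    _ = ∑ m, ∑ c, adjugate M c m * D (M m c) := Finset.sum_comm


lemma skew_sum {ι : Type*} [Fintype ι] (h2 : (2 : K) ≠ 0) (Y S : ι → ι → K)
    (hY : ∀ p q, Y p q = - Y q p) (hS : ∀ p q, S p q = S q p) :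
    ∑ p, ∑ q, Y p q * S p q = 0 := by
  have key : (∑ p, ∑ q, Y p q * S p q) + (∑ p, ∑ q, Y q p * S q p) = 0 := by
    rw [← Finset.sum_add_distrib]
    apply Finset.sum_eq_zero; intro p _
    rw [← Finset.sum_add_distrib]
    apply Finset.sum_eq_zero; intro q _
    rw [hY p q, hS p q]; ring
  have e2 : (∑ p, ∑ q, Y q p * S q p) = ∑ p, ∑ q, Y p q * S p q := Finset.sum_comm
  rw [e2] at key
  have h2' : (2 : K) * (∑ p, ∑ q, Y p q * S p q) = 0 := by rw [two_mul]; exact key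
  rcases mul_eq_zero.mp h2' with h' | h'
  · exact absurd h' h2
  · exact h'

def IsPB {R : Type*} [CommRing R] (P : R → R → R) : Prop :=
  (∀ a b c : R, P (a + b) c = P a c + P b c) ∧
  (∀ a b : R, P a b = - P b a) ∧
  (∀ a b c : R, P a (b * c) = b * P a c + P a b * c) ∧
  (∀ a b c : R, P a (P b c) + P b (P c a) + P c (P a b) = 0)

open Matrix in
lemma key (h2 : (2 : K) ≠ 0) (P' : K → K → K) (hP' : IsPB P')
    {N : ℕ} (x : Fin N → Fin (N + 1) → K)
    (Y : Fin N → Fin (N + 1) → Fin (N + 1) → K)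
    (hxx : ∀ m l p q, P' (x m p) (x l q) = if m = l then Y m p q else 0)
    (hYskew : ∀ m p q, Y m p q = - Y m q p)
    (hd0 : (Matrix.of fun l c => x l ((0 : Fin (N + 1)).succAbove c)).det ≠ 0)
    (i j : Fin (N + 1)) :
    P' ((Matrix.of fun l c => x l (i.succAbove c)).det
          / (Matrix.of fun l c => x l ((0 : Fin (N + 1)).succAbove c)).det)
       ((Matrix.of fun l c => x l (j.succAbove c)).det
          / (Matrix.of fun l c => x l ((0 : Fin (N + 1)).succAbove c)).det) = 0 := by
  obtain ⟨hadd, hskew, hleib, _⟩ := hP'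
  set M : Fin (N + 1) → Matrix (Fin N) (Fin N) K :=
    fun p => Matrix.of fun l c => x l (p.succAbove c) with hM
  set d : Fin (N + 1) → K := fun p => (M p).det with hd
  have hd0' : d 0 ≠ 0 := hd0
  have hadd2 : ∀ a b c : K, P' a (b + c) = P' a b + P' a c := by
    intro a b c
    rw [hskew a (b + c), hadd, hskew b a, hskew c a]; ring
  have hleib1 : ∀ a b c : K, P' (a * b) c = a * P' b c + P' a c * b := by
    intro a b c
    rw [hskew (a * b) c, hleib, hskew b c, hskew a c]; ring
  have hPaa : ∀ a : K, P' a a = 0 := by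
    intro a
    have h := hskew a a
    have h2' : (2 : K) * P' a a = 0 := by rw [two_mul]; nth_rewrite 2 [h]; ring
    rcases mul_eq_zero.mp h2' with h' | h'
    · exact absurd h' h2
    · exact h'
  set u : Fin (N + 1) → Fin N → Fin (N + 1) → K := fun a m p =>
    ((M a).updateRow m (fun c => if a.succAbove c = p then 1 else 0)).det with hu
  have hu_self : ∀ a m, u a m a = 0 := by
    intro a m
    apply Matrix.det_eq_zero_of_row_eq_zero m
    intro c
    rw [Matrix.updateRow_self]
    exact if_neg (Fin.succAbove_ne a c)
  have hu_adj : ∀ a m c, u a m (a.succAbove c) = adjugate (M a) c m := by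
    intro a m c
    have hrow : (fun c' => if a.succAbove c' = a.succAbove c then 1 else 0)
        = (Pi.single c 1 : Fin N → K) := by
      funext c'
      by_cases h : c' = c
      · subst h; rw [if_pos rfl, Pi.single_eq_same]
      · rw [if_neg (fun hh => h (Fin.succAbove_right_injective hh)), Pi.single_eq_of_ne h]
    show ((M a).updateRow m fun c' => if a.succAbove c' = a.succAbove c then 1 else 0).det = _
    rw [hrow, Matrix.adjugate_apply]
  have hR1 : ∀ (a : Fin (N + 1)) (z : K), P' (d a) z = ∑ m, ∑ p, u a m p * P' (x m p) z := by
    intro a z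
    have hD := deriv_det (D := fun y => P' y z) (fun y y' => hadd y y' z)
      (fun y y' => hleib1 y y' z) (M a)
    have hda : d a = (M a).det := rfl
    rw [hda, hD]
    apply Finset.sum_congr rfl
    intro m _
    rw [Fin.sum_univ_succAbove (fun p => u a m p * P' (x m p) z) a]
    rw [hu_self, zero_mul, zero_add]
    apply Finset.sum_congr rfl
    intro c _
    rw [hu_adj]
    rfl
  have hR2 : ∀ a m l, (∑ p, x l p * u a m p) = if l = m then d a else 0 := by
    intro a m l
    rw [Fin.sum_univ_succAbove (fun p => x l p * u a m p) a, hu_self, mul_zero, zero_add]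
    have e : ∀ c, x l (a.succAbove c) * u a m (a.succAbove c) = (M a) l c * adjugate (M a) c m := by
      intro c; rw [hu_adj]; rfl
    rw [Finset.sum_congr rfl (fun c _ => e c), ← Matrix.mul_apply, Matrix.mul_adjugate]
    rw [Matrix.smul_apply, Matrix.one_apply]
    by_cases h : l = m
    · rw [if_pos h, if_pos h, smul_eq_mul, mul_one]
    · rw [if_neg h, if_neg h, smul_eq_mul, mul_zero]
  have hR3 : ∀ l, (∑ p : Fin (N + 1), (-1 : K) ^ (p : ℕ) * x l p * d p) = 0 := by
    intro l
    set Nm : Matrix (Fin (N + 1)) (Fin (N + 1)) K := Matrix.of (Fin.cons (x l) x : Fin (N + 1) → Fin (N + 1) → K) with hNm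
    have hdet0 : Nm.det = 0 := by
      apply Matrix.det_zero_of_row_eq (i := (0 : Fin (N + 1))) (j := l.succ)
        (Fin.succ_ne_zero l).symm
      show (Fin.cons (x l) x : Fin (N + 1) → Fin (N + 1) → K) (0 : Fin (N + 1)) = (Fin.cons (x l) x : Fin (N + 1) → Fin (N + 1) → K) l.succ
      rw [Fin.cons_zero, Fin.cons_succ]
    have hexp := Matrix.det_succ_row_zero Nm
    rw [hdet0] at hexp
    have e : (∑ p : Fin (N + 1), (-1 : K) ^ (p : ℕ) * x l p * d p)
        = ∑ p : Fin (N + 1), (-1 : K) ^ (p : ℕ) * Nm 0 p * (Nm.submatrix Fin.succ p.succAbove).det := by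
      apply Finset.sum_congr rfl
      intro p _
      have h1 : Nm 0 p = x l p := by
        show (Fin.cons (x l) x : Fin (N + 1) → Fin (N + 1) → K) (0 : Fin (N + 1)) p = x l p
        rw [Fin.cons_zero]
      have h2' : (Nm.submatrix Fin.succ p.succAbove) = M p := by
        funext r c
        show (Fin.cons (x l) x : Fin (N + 1) → Fin (N + 1) → K) r.succ (p.succAbove c) = x r (p.succAbove c)
        rw [Fin.cons_succ]
      rw [h1, h2']
    rw [e]
    exact hexp.symm
  have hker : ∀ (wv : Fin (N + 1) → K), (∀ l, (∑ p, x l p * wv p) = 0) →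
      ∀ p, wv p = (wv 0 / d 0) * ((-1 : K) ^ (p : ℕ) * d p) := by
    intro wv hw
    set z : Fin (N + 1) → K := fun p => wv p - (wv 0 / d 0) * ((-1 : K) ^ (p : ℕ) * d p) with hz
    have hz0 : z 0 = 0 := by
      show wv 0 - (wv 0 / d 0) * ((-1 : K) ^ ((0 : Fin (N + 1)) : ℕ) * d 0) = 0
      rw [Fin.val_zero, pow_zero, one_mul, div_mul_cancel₀ _ hd0', sub_self]
    have hzl : ∀ l, (∑ p, x l p * z p) = 0 := by
      intro l
      have e : (∑ p, x l p * z p) = (∑ p, x l p * wv p)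
          - (wv 0 / d 0) * ∑ p : Fin (N + 1), (-1 : K) ^ (p : ℕ) * x l p * d p := by
        rw [Finset.mul_sum, ← Finset.sum_sub_distrib]
        apply Finset.sum_congr rfl
        intro p _
        show x l p * (wv p - (wv 0 / d 0) * ((-1 : K) ^ (p : ℕ) * d p)) = _
        ring
      rw [e, hw l, hR3 l, mul_zero, sub_zero]
    set z' : Fin N → K := fun c => z ((0 : Fin (N + 1)).succAbove c) with hz'
    have hmv : (M 0).mulVec z' = 0 := by
      funext l
      show (∑ c, (M 0) l c * z' c) = 0
      have e := hzl l
      rw [Fin.sum_univ_succAbove (fun p => x l p * z p) 0, hz0, mul_zero, zero_add] at e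
      exact e
    have hz'0 : z' = 0 := by
      have hunit : IsUnit (M 0).det := isUnit_iff_ne_zero.mpr hd0'
      calc z' = (1 : Matrix (Fin N) (Fin N) K).mulVec z' := (Matrix.one_mulVec z').symm
        _ = ((M 0)⁻¹ * (M 0)).mulVec z' := by rw [Matrix.nonsing_inv_mul _ hunit]
        _ = (M 0)⁻¹.mulVec ((M 0).mulVec z') := (Matrix.mulVec_mulVec _ _ _).symm
        _ = (M 0)⁻¹.mulVec 0 := by rw [hmv]
        _ = 0 := Matrix.mulVec_zero _
    intro p
    have hzp : z p = 0 := by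
      induction p using Fin.cases with
      | zero => exact hz0
      | succ c =>
        have : z c.succ = z' c := rfl
        rw [this, hz'0]
        rfl
    exact sub_eq_zero.mp hzp
  have hPdd : ∀ a b : Fin (N + 1), P' (d a) (d b)
      = ∑ m, ∑ p, ∑ q, Y m p q * (u a m p * u b m q) := by
    intro a b
    rw [hR1 a (d b)]
    apply Finset.sum_congr rfl
    intro m _
    have hx : ∀ p, P' (x m p) (d b) = ∑ q, u b m q * Y m p q := by
      intro p
      rw [hskew (x m p) (d b), hR1 b (x m p)]
      have e : ∀ l, (∑ q, u b l q * P' (x l q) (x m p))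
          = if l = m then (∑ q, u b l q * Y l q p) else 0 := by
        intro l
        by_cases h : l = m
        · rw [if_pos h]
          apply Finset.sum_congr rfl
          intro q _
          rw [hxx l m q p, if_pos h]
        · rw [if_neg h]
          apply Finset.sum_eq_zero
          intro q _
          rw [hxx l m q p, if_neg h, mul_zero]
      rw [Finset.sum_congr rfl (fun l _ => e l),
        Finset.sum_ite_eq' Finset.univ m (fun l => ∑ q, u b l q * Y l q p),
        if_pos (Finset.mem_univ m)]
      have e2 : (∑ q, u b m q * Y m p q) = ∑ q, -(u b m q * Y m q p) := by
        apply Finset.sum_congr rfl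
        intro q _
        rw [hYskew m p q]; ring
      rw [e2, Finset.sum_neg_distrib]
    apply Finset.sum_congr rfl
    intro p _
    rw [hx p, Finset.mul_sum]
    apply Finset.sum_congr rfl
    intro q _
    ring
  set w : Fin (N + 1) → Fin N → Fin (N + 1) → K :=
    fun a m p => u a m p * d 0 - d a * u 0 m p with hwdef
  have hwker : ∀ a m p, w a m p = (w a m 0 / d 0) * ((-1 : K) ^ (p : ℕ) * d p) := by
    intro a m
    apply hker
    intro l
    have e : (∑ p, x l p * w a m p)
        = (∑ p, x l p * u a m p) * d 0 - d a * (∑ p, x l p * u 0 m p) := by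
      rw [Finset.sum_mul, Finset.mul_sum, ← Finset.sum_sub_distrib]
      apply Finset.sum_congr rfl
      intro p _
      show x l p * (u a m p * d 0 - d a * u 0 m p) = _
      ring
    rw [e, hR2 a m l, hR2 0 m l]
    by_cases h : l = m
    · rw [if_pos h, if_pos h]; ring
    · rw [if_neg h, if_neg h]; ring
  have hsum_m : ∀ a b : Fin (N + 1), ∀ m,
      (∑ p, ∑ q, Y m p q * (w a m p * w b m q)) = 0 := by
    intro a b m
    have e : (∑ p, ∑ q, Y m p q * (w a m p * w b m q))
        = (w a m 0 / d 0) * (w b m 0 / d 0)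
          * ∑ p, ∑ q, Y m p q * (((-1 : K) ^ (p : ℕ) * d p) * ((-1 : K) ^ (q : ℕ) * d q)) := by
      rw [Finset.mul_sum]
      apply Finset.sum_congr rfl
      intro p _
      rw [Finset.mul_sum]
      apply Finset.sum_congr rfl
      intro q _
      rw [hwker a m p, hwker b m q]
      ring
    rw [e, skew_sum h2 (Y m) _ (hYskew m)
      (fun p q => by ring), mul_zero]
  have hsum0 : ∀ m, (∑ p, ∑ q, Y m p q * (u 0 m p * u 0 m q)) = 0 := by
    intro m
    exact skew_sum h2 (Y m) _ (hYskew m) (fun p q => mul_comm _ _)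
  set hi : K := d i / d 0 with hhi
  set hj : K := d j / d 0 with hhj
  have hdi : d i = hi * d 0 := (div_mul_cancel₀ (d i) hd0').symm
  have hdj : d j = hj * d 0 := (div_mul_cancel₀ (d j) hd0').symm
  have e2 : P' (d i) (d 0) = P' hi (d 0) * d 0 := by
    nth_rewrite 1 [hdi]
    rw [hleib1, hPaa, mul_zero, zero_add]
  have e3 : P' (d 0) (d j) = P' (d 0) hj * d 0 := by
    nth_rewrite 1 [hdj]
    rw [hleib, hPaa, mul_zero, zero_add]
  have e1 : P' (d i) (d j)
      = hi * (P' (d 0) hj * d 0) + (hj * P' hi (d 0) + P' hi hj * d 0) * d 0 := by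
    nth_rewrite 1 [hdi]
    nth_rewrite 1 [hdj]
    rw [hleib1 hi (d 0) (hj * d 0), hleib (d 0) hj (d 0), hleib hi hj (d 0),
      hPaa, mul_zero, zero_add]
  have hnum : d 0 * P' (d i) (d j) - d j * P' (d i) (d 0) - d i * P' (d 0) (d j)
      = (d 0) ^ 3 * P' hi hj := by
    rw [e1, e2, e3, hdi, hdj]; ring
  have expand : ∀ m, d 0 * (d 0 * (∑ p, ∑ q, Y m p q * (u i m p * u j m q))
      - d j * (∑ p, ∑ q, Y m p q * (u i m p * u 0 m q))
      - d i * (∑ p, ∑ q, Y m p q * (u 0 m p * u j m q)))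
      = (∑ p, ∑ q, Y m p q * (w i m p * w j m q))
        - d i * d j * (∑ p, ∑ q, Y m p q * (u 0 m p * u 0 m q)) := by
    intro m
    simp only [hwdef, mul_sub, Finset.mul_sum, ← Finset.sum_sub_distrib]
    apply Finset.sum_congr rfl
    intro p _
    apply Finset.sum_congr rfl
    intro q _
    ring
  have hfinal : d 0 * (d 0 * P' (d i) (d j) - d j * P' (d i) (d 0) - d i * P' (d 0) (d j)) = 0 := by
    rw [hPdd i j, hPdd i 0, hPdd 0 j]
    have hgoal : d 0 * (d 0 * (∑ m, ∑ p, ∑ q, Y m p q * (u i m p * u j m q))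
        - d j * (∑ m, ∑ p, ∑ q, Y m p q * (u i m p * u 0 m q))
        - d i * (∑ m, ∑ p, ∑ q, Y m p q * (u 0 m p * u j m q)))
        = ∑ m, (d 0 * (d 0 * (∑ p, ∑ q, Y m p q * (u i m p * u j m q))
          - d j * (∑ p, ∑ q, Y m p q * (u i m p * u 0 m q))
          - d i * (∑ p, ∑ q, Y m p q * (u 0 m p * u j m q)))) := by
      simp only [mul_sub, Finset.mul_sum, ← Finset.sum_sub_distrib]
    rw [hgoal]
    apply Finset.sum_eq_zero
    intro m _
    have h := expand m
    rw [hsum_m i j m, hsum0 m, mul_zero, zero_sub, neg_zero] at h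
    exact h
  rw [hnum] at hfinal
  have hne : d 0 * (d 0) ^ 3 ≠ 0 := mul_ne_zero hd0' (pow_ne_zero 3 hd0')
  have : P' hi hj = 0 := by
    by_contra hc
    apply hne
    have := hfinal
    rw [← mul_assoc] at this
    rcases mul_eq_zero.mp this with h' | h'
    · exact h'
    · exact absurd h' hc
  exact this


open Matrix in
lemma det_eq_sum_perm {N : ℕ} (M : Matrix (Fin N) (Fin N) K) :
    M.det = ∑ σ : Equiv.Perm (Fin N), (Equiv.Perm.sign σ : ℤ) • ∏ l, M l (σ l) := by
  conv_lhs => rw [← Matrix.det_transpose M, Matrix.det_apply]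
  simp only [Units.smul_def, Matrix.transpose_apply]

open PiTensorProduct in
lemma tprod_eq_prod {k A' : Type*} [CommSemiring k] [CommRing A'] [Algebra k A'] {n : ℕ}
    (g : Fin n → A') :
    (tprod k g : ⨂[k] (_ : Fin n), A')
      = ∏ l, tprod k (Function.update (fun _ => (1 : A')) l (g l)) := by
  have main : ∀ S : Finset (Fin n),
      (∏ l ∈ S, (tprod k (Function.update (fun _ => (1 : A')) l (g l)) : ⨂[k] (_ : Fin n), A'))
      = tprod k (fun j => if j ∈ S then g j else 1) := by
    intro S
    induction S using Finset.induction_on with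
    | empty =>
      rw [Finset.prod_empty]
      have : (fun j : Fin n => if j ∈ (∅ : Finset (Fin n)) then g j else 1)
          = (1 : Fin n → A') := by
        funext j; simp
      rw [this]
      exact PiTensorProduct.one_def
    | @insert a S ha ih =>
      rw [Finset.prod_insert ha, ih, PiTensorProduct.tprod_mul_tprod]
      congr 1
      funext j
      show Function.update (fun _ => (1 : A')) a (g a) j * (if j ∈ S then g j else 1)
          = if j ∈ insert a S then g j else 1
      by_cases h : j = a
      · subst h
        rw [Function.update_self, if_neg ha, mul_one, if_pos (Finset.mem_insert_self j S)]
      · rw [Function.update_of_ne h, one_mul]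
        by_cases h2 : j ∈ S
        · rw [if_pos h2, if_pos (Finset.mem_insert_of_mem h2)]
        · rw [if_neg h2, if_neg (fun hc => by
            rcases Finset.mem_insert.mp hc with h3 | h3
            · exact h h3
            · exact h2 h3)]
  rw [main Finset.univ]
  congr 1
  funext j
  rw [if_pos (Finset.mem_univ j)]

end Stmt8Aux

/-- Let `A` be a commutative Poisson algebra over a field `k` of
characteristic ≠ 2, `n ≥ 1`, and suppose the `n`-th tensor power `A^{⊗n}`, with the
product (factorwise) Poisson bracket `PT`, is an integral domain with fraction field `K`
carrying the extended bracket `P'`. For linearly independent `f₀, …, f_n ∈ A`, set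
`Δ_i = [f₀,…,f̂_i,…,f_n] = Σ_{σ} ε(σ) f_{σ(1)} ⊗ ⋯ ⊗ f_{σ(n)}` (the sum over bijections
`σ : {1,…,n} → {0,…,n}\{i}`, realized via `Fin.succAbove i` composed with permutations of
`Fin n`). Then `Δ₀ ≠ 0` and, with `H_i = Δ_i/Δ₀ ∈ K`, one has `{H_i, H_j} = 0` for all
`i, j`. -/
theorem stmt8 {k A : Type*} [Field k] (hchar : (2 : k) ≠ 0)
    [CommRing A] [Algebra k A]
    (P : A → A → A) (hP : IsPoissonBracket P)
    {n : ℕ} (hn : 1 ≤ n)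
    [IsDomain (⨂[k] (_ : Fin n), A)]
    -- the slot embeddings `a ↦ 1 ⊗ ⋯ ⊗ a ⊗ ⋯ ⊗ 1`
    (ι : Fin n → A → ⨂[k] (_ : Fin n), A)
    (hι : ∀ j a, ι j a = PiTensorProduct.tprod k (Function.update (fun _ => (1 : A)) j a))
    -- the product Poisson structure on the tensor power
    (PT : (⨂[k] (_ : Fin n), A) → (⨂[k] (_ : Fin n), A) → ⨂[k] (_ : Fin n), A)
    (hPT : IsPoissonBracket PT)
    (hPTfac : ∀ (j l : Fin n) (a b : A),
      PT (ι j a) (ι l b) = if j = l then ι j (P a b) else 0)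
    -- the extended Poisson bracket on the fraction field
    (P' : FractionRing (⨂[k] (_ : Fin n), A) → FractionRing (⨂[k] (_ : Fin n), A) →
      FractionRing (⨂[k] (_ : Fin n), A))
    (hP' : IsPoissonBracket P')
    (hext : ∀ x y : ⨂[k] (_ : Fin n), A,
      P' (algebraMap _ (FractionRing (⨂[k] (_ : Fin n), A)) x)
         (algebraMap _ (FractionRing (⨂[k] (_ : Fin n), A)) y)
        = algebraMap _ (FractionRing (⨂[k] (_ : Fin n), A)) (PT x y))
    (f : Fin (n + 1) → A) (hind : LinearIndependent k f)
    (Δ : Fin (n + 1) → ⨂[k] (_ : Fin n), A)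
    (hΔ : ∀ i, Δ i = ∑ σ : Equiv.Perm (Fin n),
      (Equiv.Perm.sign σ : ℤ) • PiTensorProduct.tprod k (fun j => f (i.succAbove (σ j)))) :
    Δ 0 ≠ 0 ∧
    ∀ i j : Fin (n + 1),
      P' (algebraMap _ (FractionRing (⨂[k] (_ : Fin n), A)) (Δ i)
            / algebraMap _ (FractionRing (⨂[k] (_ : Fin n), A)) (Δ 0))
         (algebraMap _ (FractionRing (⨂[k] (_ : Fin n), A)) (Δ j)
            / algebraMap _ (FractionRing (⨂[k] (_ : Fin n), A)) (Δ 0)) = 0 := by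
  classical
  set φ := algebraMap (⨂[k] (_ : Fin n), A) (FractionRing (⨂[k] (_ : Fin n), A)) with hφdef
  -- Δ 0 ≠ 0
  have hinj : Function.Injective f := hind.injective
  have hs : LinearIndepOn k id (Set.range f) := (linearIndepOn_id_range_iff hinj).mpr hind
  set b := Module.Basis.extend hs with hb
  have hmem : ∀ p, f p ∈ hs.extend (Set.subset_univ (Set.range f)) :=
    fun p => hs.subset_extend _ ⟨p, rfl⟩
  set μ : Fin (n + 1) → A →ₗ[k] k := fun p => b.coord ⟨f p, hmem p⟩ with hμdef
  have hμ : ∀ p q, μ p (f q) = if q = p then 1 else 0 := by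
    intro p q
    have hfq : f q = b ⟨f q, hmem q⟩ := (Module.Basis.extend_apply_self hs ⟨f q, hmem q⟩).symm
    have : μ p (f q) = b.repr (f q) ⟨f p, hmem p⟩ := rfl
    rw [this, hfq, Module.Basis.repr_self, Finsupp.single_apply]
    by_cases h : q = p
    · rw [if_pos h, if_pos (by rw [h])]
    · rw [if_neg (fun hh => h (hinj (Subtype.ext_iff.mp hh))), if_neg h]
  set F : (⨂[k] (_ : Fin n), A) →ₗ[k] k := PiTensorProduct.lift
    ((MultilinearMap.mkPiAlgebra k (Fin n) k).compLinearMap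
      (fun l => μ ((0 : Fin (n + 1)).succAbove l))) with hF
  have hFtprod : ∀ g : Fin n → A, F (PiTensorProduct.tprod k g)
      = ∏ l, μ ((0 : Fin (n + 1)).succAbove l) (g l) := by
    intro g
    rw [hF, PiTensorProduct.lift.tprod]
    simp [MultilinearMap.compLinearMap_apply, MultilinearMap.mkPiAlgebra_apply]
  have hF1 : F (Δ 0) = 1 := by
    rw [hΔ 0, map_sum]
    have e : ∀ σ : Equiv.Perm (Fin n),
        F ((Equiv.Perm.sign σ : ℤ) •
          PiTensorProduct.tprod k (fun l => f ((0 : Fin (n + 1)).succAbove (σ l))))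
        = (Equiv.Perm.sign σ : ℤ) • (if σ = 1 then (1 : k) else 0) := by
      intro σ
      rw [map_zsmul, hFtprod]
      congr 1
      by_cases h : σ = 1
      · subst h
        rw [if_pos rfl]
        apply Finset.prod_eq_one
        intro l _
        rw [show (1 : Equiv.Perm (Fin n)) l = l from rfl, hμ, if_pos rfl]
      · rw [if_neg h]
        obtain ⟨l, hl⟩ : ∃ l, σ l ≠ l := by
          by_contra hc
          push_neg at hc
          exact h (Equiv.ext hc)
        apply Finset.prod_eq_zero (Finset.mem_univ l)
        rw [hμ]
        exact if_neg (fun hh => hl (Fin.succAbove_right_injective hh))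
    rw [Finset.sum_congr rfl (fun σ _ => e σ)]
    rw [Finset.sum_eq_single (1 : Equiv.Perm (Fin n))]
    · rw [if_pos rfl, Equiv.Perm.sign_one]
      norm_num
    · intro σ _ hσ
      rw [if_neg hσ, smul_zero]
    · intro h
      exact absurd (Finset.mem_univ _) h
  have hΔ0 : Δ 0 ≠ 0 := by
    intro h
    rw [h, map_zero] at hF1
    exact one_ne_zero hF1.symm
  refine ⟨hΔ0, ?_⟩
  -- setup data for `key`
  set xK : Fin n → Fin (n + 1) → FractionRing (⨂[k] (_ : Fin n), A) :=
    fun m p => φ (ι m (f p)) with hxK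
  set YK : Fin n → Fin (n + 1) → Fin (n + 1) → FractionRing (⨂[k] (_ : Fin n), A) :=
    fun m p q => φ (ι m (P (f p) (f q))) with hYK
  have hφinj : Function.Injective φ :=
    IsFractionRing.injective (⨂[k] (_ : Fin n), A) (FractionRing (⨂[k] (_ : Fin n), A))
  have hdet : ∀ p : Fin (n + 1),
      φ (Δ p) = (Matrix.of fun l c => xK l (p.succAbove c)).det := by
    intro p
    rw [hΔ p, map_sum, Stmt8Aux.det_eq_sum_perm]
    apply Finset.sum_congr rfl
    intro σ _
    rw [map_zsmul]
    congr 1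
    rw [Stmt8Aux.tprod_eq_prod, map_prod]
    apply Finset.prod_congr rfl
    intro l _
    rw [← hι]
    rfl
  have h2R : (2 : ⨂[k] (_ : Fin n), A) ≠ 0 := by
    have hkR : Function.Injective (algebraMap k (⨂[k] (_ : Fin n), A)) :=
      (algebraMap k (⨂[k] (_ : Fin n), A)).injective
    intro h
    apply hchar
    apply hkR
    rw [map_ofNat, map_zero]
    exact h
  have h2K : (2 : FractionRing (⨂[k] (_ : Fin n), A)) ≠ 0 := by
    intro h
    apply h2R
    apply hφinj
    rw [map_ofNat, map_zero]
    exact h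
  have hιneg : ∀ (m : Fin n) (a : A), ι m (-a) = - ι m a := by
    intro m a
    rw [hι, hι]
    have e : Function.update (fun _ => (1 : A)) m (-a)
        = Function.update (fun _ => (1 : A)) m ((-1 : k) • a) := by
      rw [neg_one_smul]
    rw [e, MultilinearMap.map_update_smul, neg_one_smul]
  have hxx : ∀ m l p q, P' (xK m p) (xK l q) = if m = l then YK m p q else 0 := by
    intro m l p q
    have : P' (xK m p) (xK l q) = φ (PT (ι m (f p)) (ι l (f q))) := hext _ _
    rw [this, hPTfac]
    by_cases h : m = l
    · rw [if_pos h, if_pos h]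
    · rw [if_neg h, if_neg h, map_zero]
  have hYskew : ∀ m p q, YK m p q = - YK m q p := by
    intro m p q
    show φ (ι m (P (f p) (f q))) = - φ (ι m (P (f q) (f p)))
    rw [hP.2.1 (f p) (f q), hιneg, map_neg]
  have hd0K : (Matrix.of fun l c => xK l ((0 : Fin (n + 1)).succAbove c)).det ≠ 0 := by
    rw [← hdet 0]
    intro h
    exact hΔ0 (hφinj (by rw [h, map_zero]))
  intro i j
  rw [hdet i, hdet j, hdet 0]
  exact Stmt8Aux.key h2K P' ⟨hP'.1, hP'.2.1, hP'.2.2.1, hP'.2.2.2⟩ xK YK hxx hYskew hd0K i j
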